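/- Let p ≥ 2 and k ≥ p + 1, and consider the complete graph K_k on vertex set {1,...,k} with the conflict relation in which edges (u1,v1), (u2,v2) are conflicting if v2 - u1 ≥ p or v1 - u2 ≥ p. Then the maximum size of a set of pairwise conflicting edges in K_k equals binom(k - p + 2, 2), attained by the set of all edges of length at least p - 1. -/

import Mathlib

open Finset

lemma count_pairs (s : Finset ℤ) :
    ((s ×ˢ s).filter fun e => e.1 < e.2).card = s.card.choose 2 := by
  rw [← Finset.card_powersetCard 2 s]
  apply Finset.card_bij (fun e _ => ({e.1, e.2} : Finset ℤ))
  · intro e he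
    simp only [mem_filter, mem_product] at he
    rw [Finset.mem_powersetCard]
    refine ⟨?_, ?_⟩
    · intro x hx
      simp only [mem_insert, mem_singleton] at hx
      rcases hx with h | h
      · exact h ▸ he.1.1
      · exact h ▸ he.1.2
    · exact Finset.card_pair (by have := he.2; omega)
  · intro e1 h1 e2 h2 h
    simp only [mem_filter, mem_product] at h1 h2
    have m1 : e1.1 ∈ ({e2.1, e2.2} : Finset ℤ) := by rw [← h]; simp
    have m2 : e1.2 ∈ ({e2.1, e2.2} : Finset ℤ) := by rw [← h]; simp
    have m3 : e2.1 ∈ ({e1.1, e1.2} : Finset ℤ) := by rw [h]; simp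
    simp only [mem_insert, mem_singleton] at m1 m2 m3
    have q1 := h1.2; have q2 := h2.2
    rw [Prod.ext_iff]
    omega
  · intro t ht
    rw [Finset.mem_powersetCard] at ht
    obtain ⟨a, b, hab, rfl⟩ := Finset.card_eq_two.mp ht.2
    have ha : a ∈ s := ht.1 (by simp)
    have hb : b ∈ s := ht.1 (by simp)
    rcases lt_or_gt_of_ne hab with h | h
    · exact ⟨(a,b), by simp [mem_filter, mem_product, ha, hb, h], rfl⟩
    · exact ⟨(b,a), by simp [mem_filter, mem_product, ha, hb, h],
        by rw [Finset.pair_comm]⟩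

lemma cardT (p k : ℕ) (hp : 2 ≤ p) (hk : p + 1 ≤ k) :
    (((Finset.Icc (1:ℤ) k ×ˢ Finset.Icc (1:ℤ) k)).filter
      (fun e => e.1 < e.2 ∧ (p:ℤ) - 1 ≤ e.2 - e.1)).card = (k - p + 2).choose 2 := by
  have key := count_pairs (Finset.Icc (1:ℤ) ((k:ℤ) - p + 2))
  have hc : (Finset.Icc (1:ℤ) ((k:ℤ) - p + 2)).card = k - p + 2 := by
    rw [Int.card_Icc]; omega
  rw [hc] at key
  rw [← key]
  apply Finset.card_nbij' (fun e => (e.1, e.2 - (p:ℤ) + 2))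
      (fun e => (e.1, e.2 + (p:ℤ) - 2))
  · intro e he
    simp only [mem_coe, mem_filter, mem_product, mem_Icc] at he ⊢
    omega
  · intro e he
    simp only [mem_coe, mem_filter, mem_product, mem_Icc] at he ⊢
    omega
  · intro e he
    simp only [Prod.ext_iff]
    exact ⟨trivial, by ring⟩
  · intro e he
    simp only [Prod.ext_iff]
    exact ⟨trivial, by ring⟩

/-- For `p ≥ 2` and `k ≥ p + 1`, in the complete graph on `{1,…,k}` with conflicts
`v2 - u1 ≥ p ∨ v1 - u2 ≥ p`, the maximum size of a set of pairwise conflicting edges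
is `binom (k-p+2) 2`, attained by the set of all edges of length at least `p - 1`. -/
theorem stmt16 (p k : ℕ) (hp : 2 ≤ p) (hk : p + 1 ≤ k) :
    (∀ S : Finset (ℤ × ℤ),
      (∀ e ∈ S, 1 ≤ e.1 ∧ e.1 < e.2 ∧ e.2 ≤ (k : ℤ)) →
      (∀ e1 ∈ S, ∀ e2 ∈ S, e1 ≠ e2 →
        ((p : ℤ) ≤ e2.2 - e1.1 ∨ (p : ℤ) ≤ e1.2 - e2.1)) →
      S.card ≤ (k - p + 2).choose 2) ∧
    (∃ S : Finset (ℤ × ℤ), S.card = (k - p + 2).choose 2 ∧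
      (∀ e : ℤ × ℤ, e ∈ S ↔
        (1 ≤ e.1 ∧ e.1 < e.2 ∧ e.2 ≤ (k : ℤ) ∧ (p : ℤ) - 1 ≤ e.2 - e.1)) ∧
      (∀ e1 ∈ S, ∀ e2 ∈ S, e1 ≠ e2 →
        ((p : ℤ) ≤ e2.2 - e1.1 ∨ (p : ℤ) ≤ e1.2 - e2.1))) := by
  set T : Finset (ℤ × ℤ) := ((Finset.Icc (1:ℤ) k ×ˢ Finset.Icc (1:ℤ) k)).filter
      (fun e => e.1 < e.2 ∧ (p:ℤ) - 1 ≤ e.2 - e.1) with hT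
  have hmemT : ∀ e : ℤ × ℤ, e ∈ T ↔
      (1 ≤ e.1 ∧ e.1 < e.2 ∧ e.2 ≤ (k : ℤ) ∧ (p : ℤ) - 1 ≤ e.2 - e.1) := by
    intro e
    simp only [hT, mem_filter, mem_product, mem_Icc]
    omega
  constructor
  · intro S hb hc
    by_cases h1 : S.card ≤ 1
    · have : 0 < (k - p + 2).choose 2 := Nat.choose_pos (by omega)
      omega
    · push_neg at h1
      have stretch : ∀ e ∈ S, e.1 + p - 1 ≤ (k:ℤ) ∨ (p:ℤ) ≤ e.2 := by
        intro e he
        obtain ⟨e', he', hne⟩ := Finset.exists_mem_ne h1 e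
        have hcf := hc e he e' he' (Ne.symm hne)
        have b1 := hb e he
        have b2 := hb e' he'
        omega
      rw [← cardT p k hp hk]
      apply Finset.card_le_card_of_injOn
        (fun e => if (p:ℤ) - 1 ≤ e.2 - e.1 then e
          else if e.1 + p - 1 ≤ (k:ℤ) then (e.1, e.1 + (p:ℤ) - 1)
          else (e.2 - (p:ℤ) + 1, e.2))
      · intro e he
        have b1 := hb e he
        have hs := stretch e he
        rw [← hT]
        obtain ⟨u, v⟩ := e
        dsimp only at b1 hs ⊢
        split_ifs with hL hR <;> rw [mem_coe, hmemT] <;> dsimp only <;> omega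
      · intro e1 h1' e2 h2' hg
        by_contra hne
        have hcf := hc e1 h1' e2 h2' hne
        have b1 := hb e1 h1'
        have b2 := hb e2 h2'
        obtain ⟨u1, v1⟩ := e1
        obtain ⟨u2, v2⟩ := e2
        simp only [Prod.mk.injEq, not_and] at hne
        simp only [] at hg hcf b1 b2
        split_ifs at hg <;> simp only [Prod.mk.injEq] at hg <;> omega
  · refine ⟨T, cardT p k hp hk, hmemT, ?_⟩
    intro e1 h1 e2 h2 hne
    rw [hmemT] at h1 h2
    by_contra hcon
    push_neg at hcon
    have : e1 = e2 := by
      rw [Prod.ext_iff]; omega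
    exact hne this
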